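/- If an improper policy (one reaching terminal states with probability p < 1 from the initial state) has its value diverge to −∞ whenever every per-step reward is at most R_max < 0, then adding a bounded-below penalty does not help: for any reward function R₀ with R₀ ≤ 0 and any valid SSP reward R (all per-step rewards < 0 in non-terminal states with values of improper policies diverging), the combination R₀ + λR for λ > 0 also makes the values of improper policies diverge to −∞. -/

import Mathlib

open Finset Filter

/-- If a reward `R` makes a valid SSP (per-step rewards `< 0` in
non-terminal states, so values of improper policies diverge), then for any
nonpositive reward `R₀` and any `λ > 0`, the combination `R₀ + λ·R` also makes
the value of any improper policy (one reaching the terminal set with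
probability `p < 1`) diverge to `−∞`. -/
theorem combined_reward_improper_diverges {S A : Type} [Fintype S] [Fintype A]
    [DecidableEq S]
    (Sf : Finset S) (T : S → A → S → ℝ)
    (R₀ R : S → A → S → ℝ) (lam : ℝ) (hlam : 0 < lam)
    (π : S → A → ℝ)
    (hT0 : ∀ s a s', 0 ≤ T s a s') (hT1 : ∀ s a, ∑ s', T s a s' = 1)
    (hπ0 : ∀ s a, 0 ≤ π s a) (hπ1 : ∀ s, ∑ a, π s a = 1)
    (habs : ∀ s ∈ Sf, ∀ a, T s a s = 1)
    (hR₀nonpos : ∀ s a s', R₀ s a s' ≤ 0)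
    (hR₀term : ∀ s ∈ Sf, ∀ a s', R₀ s a s' = 0)
    (hRterm : ∀ s ∈ Sf, ∀ a s', R s a s' = 0)
    (hRneg : ∀ s ∉ Sf, ∀ a s', R s a s' < 0)
    (s0 : S) (d : ℕ → S → ℝ)
    (hd0 : d 0 = fun s => if s = s0 then 1 else 0)
    (hd : ∀ t s', d (t + 1) s' = ∑ s, ∑ a, d t s * π s a * T s a s')
    (p : ℝ) (hp : p < 1)
    (hreach : Tendsto (fun t => ∑ s ∈ Sf, d t s) atTop (nhds p)) :
    Tendsto
      (fun n => ∑ t ∈ Finset.range n, ∑ s, ∑ a, ∑ s',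
        d t s * π s a * T s a s' * (R₀ s a s' + lam * R s a s'))
      atTop atBot := by
  -- nonnegativity of d
  have hdnn : ∀ t s, 0 ≤ d t s := by
    intro t
    induction t with
    | zero =>
      intro s; rw [hd0]; dsimp only; split <;> norm_num
    | succ t ih =>
      intro s'; rw [hd]
      exact Finset.sum_nonneg fun s _ => Finset.sum_nonneg fun a _ =>
        mul_nonneg (mul_nonneg (ih s) (hπ0 s a)) (hT0 s a s')
  -- d is a probability distribution
  have hdsum : ∀ t, ∑ s, d t s = 1 := by
    intro t
    induction t with
    | zero => rw [hd0]; simp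
    | succ t ih =>
      have : ∑ s', d (t + 1) s' = ∑ s, ∑ a, d t s * π s a := by
        calc ∑ s', d (t + 1) s' = ∑ s', ∑ s, ∑ a, d t s * π s a * T s a s' := by
              simp only [hd]
          _ = ∑ s, ∑ s', ∑ a, d t s * π s a * T s a s' := Finset.sum_comm
          _ = ∑ s, ∑ a, ∑ s', d t s * π s a * T s a s' :=
              Finset.sum_congr rfl fun s _ => Finset.sum_comm
          _ = ∑ s, ∑ a, d t s * π s a := by
              refine Finset.sum_congr rfl fun s _ => Finset.sum_congr rfl fun a _ => ?_
              rw [← Finset.mul_sum, hT1]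
              ring
      rw [this]
      calc ∑ s, ∑ a, d t s * π s a = ∑ s, d t s := by
            refine Finset.sum_congr rfl fun s _ => ?_
            rw [← Finset.mul_sum, hπ1]; ring
        _ = 1 := ih
  -- A is nonempty
  have hA : Nonempty A := by
    by_contra h
    rw [not_nonempty_iff] at h
    have := hπ1 s0
    rw [Finset.univ_eq_empty, Finset.sum_empty] at this
    norm_num at this
  -- the complement of Sf is nonempty
  have hSfc : (Finset.univ \ Sf).Nonempty := by
    rw [Finset.sdiff_nonempty]
    intro hsub
    have hq : ∀ t, ∑ s ∈ Sf, d t s = 1 := by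
      intro t
      rw [← hdsum t, Finset.univ_subset_iff.mp hsub]
    have : Tendsto (fun _ : ℕ => (1 : ℝ)) atTop (nhds p) := by
      simpa [hq] using hreach
    have := tendsto_nhds_unique this tendsto_const_nhds
    linarith
  -- minimum penalty c
  obtain ⟨x, hx, hxmin⟩ := Finset.exists_min_image
    ((Finset.univ \ Sf) ×ˢ (Finset.univ : Finset A) ×ˢ (Finset.univ : Finset S))
    (fun x => -R x.1 x.2.1 x.2.2)
    (by
      obtain ⟨s, hs⟩ := hSfc
      obtain ⟨a⟩ := hA
      exact ⟨(s, a, s0), by simp [Finset.mem_sdiff.mp hs |>.2, hs]⟩)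
  set c : ℝ := -R x.1 x.2.1 x.2.2 with hc
  have hx1 : x.1 ∉ Sf := (Finset.mem_sdiff.mp (Finset.mem_product.mp hx).1).2
  have hcpos : 0 < c := by
    have := hRneg x.1 hx1 x.2.1 x.2.2
    simp only [hc]; linarith
  have hRle : ∀ s ∉ Sf, ∀ a s', R s a s' ≤ -c := by
    intro s hs a s'
    have := hxmin (s, a, s') (by simp [Finset.mem_sdiff, hs])
    simp only at this
    linarith
  have hRnonpos : ∀ s a s', R s a s' ≤ 0 := by
    intro s a s'
    by_cases hs : s ∈ Sf
    · rw [hRterm s hs a s']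
    · exact (hRneg s hs a s').le
  set term : ℕ → ℝ := fun t => ∑ s, ∑ a, ∑ s',
      d t s * π s a * T s a s' * (R₀ s a s' + lam * R s a s') with hterm
  -- each term is nonpositive
  have htermnp : ∀ t, term t ≤ 0 := by
    intro t
    refine Finset.sum_nonpos fun s _ => Finset.sum_nonpos fun a _ =>
      Finset.sum_nonpos fun s' _ => ?_
    have h1 : 0 ≤ d t s * π s a * T s a s' :=
      mul_nonneg (mul_nonneg (hdnn t s) (hπ0 s a)) (hT0 s a s')
    have h2 : R₀ s a s' + lam * R s a s' ≤ 0 := by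
      have := hR₀nonpos s a s'
      have := mul_nonpos_of_nonneg_of_nonpos hlam.le (hRnonpos s a s')
      linarith
    exact mul_nonpos_of_nonneg_of_nonpos h1 h2
  -- key bound: term t ≤ -lam * c * (1 - q t)
  have hkey : ∀ t, term t ≤ -(lam * c) * (1 - ∑ s ∈ Sf, d t s) := by
    intro t
    have step1 : term t ≤ ∑ s ∈ Finset.univ \ Sf, d t s * -(lam * c) := by
      rw [hterm]
      dsimp only
      rw [← Finset.sum_sdiff (Finset.subset_univ Sf)]
      have hz : ∑ s ∈ Sf, ∑ a, ∑ s', d t s * π s a * T s a s' *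
          (R₀ s a s' + lam * R s a s') = 0 := by
        refine Finset.sum_eq_zero fun s hs => Finset.sum_eq_zero fun a _ =>
          Finset.sum_eq_zero fun s' _ => ?_
        rw [hR₀term s hs a s', hRterm s hs a s']
        ring
      rw [hz, add_zero]
      refine Finset.sum_le_sum fun s hs => ?_
      have hsn : s ∉ Sf := (Finset.mem_sdiff.mp hs).2
      calc ∑ a, ∑ s', d t s * π s a * T s a s' * (R₀ s a s' + lam * R s a s')
          ≤ ∑ a, ∑ s', d t s * π s a * T s a s' * -(lam * c) := by
            refine Finset.sum_le_sum fun a _ => Finset.sum_le_sum fun s' _ => ?_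
            refine mul_le_mul_of_nonneg_left ?_
              (mul_nonneg (mul_nonneg (hdnn t s) (hπ0 s a)) (hT0 s a s'))
            have h1 := hR₀nonpos s a s'
            have h2 := hRle s hsn a s'
            nlinarith
        _ = d t s * -(lam * c) := by
            have : ∀ a, ∑ s', d t s * π s a * T s a s' * -(lam * c)
                = d t s * π s a * -(lam * c) := by
              intro a
              rw [← Finset.sum_mul, ← Finset.mul_sum, hT1]
              ring
            simp only [this]
            rw [← Finset.sum_mul, ← Finset.mul_sum, hπ1]
            ring
    have step2 : ∑ s ∈ Finset.univ \ Sf, d t s * -(lam * c)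
        = -(lam * c) * (1 - ∑ s ∈ Sf, d t s) := by
      rw [← Finset.sum_mul, Finset.sum_sdiff_eq_sub (Finset.subset_univ Sf), hdsum]
      ring
    linarith [step1, step2.ge]
  -- eventually mass outside Sf is at least (1-p)/2
  set ε : ℝ := lam * c * ((1 - p) / 2) with hε
  have hεpos : 0 < ε := by
    apply mul_pos (mul_pos hlam hcpos); linarith
  have hev : ∀ᶠ t in atTop, term t ≤ -ε := by
    have h1 : ∀ᶠ t in atTop, (∑ s ∈ Sf, d t s) < (1 + p) / 2 := by
      apply hreach.eventually_lt_const; linarith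
    filter_upwards [h1] with t ht
    have hlc : 0 < lam * c := mul_pos hlam hcpos
    have h2 : (1 - p) / 2 ≤ 1 - ∑ s ∈ Sf, d t s := by linarith
    have h3 := mul_le_mul_of_nonneg_left h2 hlc.le
    have h4 := hkey t
    rw [hε]
    nlinarith
  obtain ⟨N, hN⟩ := eventually_atTop.mp hev
  -- compare partial sums with a linear function
  have hbound : ∀ n, N ≤ n → ∑ t ∈ Finset.range n, term t ≤ ε * N - ε * n := by
    intro n hn
    have hsplit : Finset.range n = Finset.range N ∪ Finset.Ico N n := by
      rw [Finset.range_eq_Ico, Finset.range_eq_Ico, Finset.Ico_union_Ico_eq_Ico (Nat.zero_le N) hn]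
    rw [hsplit, Finset.sum_union (by
      simp [Finset.disjoint_left, Finset.mem_Ico, Finset.mem_range]
      intro a ha h; omega)]
    have h1 : ∑ t ∈ Finset.range N, term t ≤ 0 :=
      Finset.sum_nonpos fun t _ => htermnp t
    have h2 : ∑ t ∈ Finset.Ico N n, term t ≤ ∑ t ∈ Finset.Ico N n, (-ε) := by
      refine Finset.sum_le_sum fun t ht => hN t (Finset.mem_Ico.mp ht).1
    rw [Finset.sum_const, Nat.card_Ico, nsmul_eq_mul] at h2
    have : ((n - N : ℕ) : ℝ) = (n : ℝ) - N := by
      rw [Nat.cast_sub hn]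
    rw [this] at h2
    nlinarith
  have hlin : Tendsto (fun n : ℕ => ε * N - ε * n) atTop atBot := by
    have h1 : Tendsto (fun n : ℕ => ε * n) atTop atTop :=
      (tendsto_natCast_atTop_atTop (R := ℝ)).const_mul_atTop hεpos
    have h2 : Tendsto (fun n : ℕ => -(ε * n)) atTop atBot := tendsto_neg_atBot_iff.mpr h1
    simpa [sub_eq_add_neg] using (tendsto_atBot_add_const_left atTop (ε * N) h2)
  refine tendsto_atBot_mono' atTop ?_ hlin
  filter_upwards [eventually_ge_atTop N] with n hn
  exact hbound n hn
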